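/- Let K ≥ 2 and identify ℝ² with ℂ. Let Ω = {e^{ikπ/K} : k = 0,…,2K−1} be the vertex set of a regular 2K-gon and define σ(e^{ikπ/K}) = (−1)^k. Then for every ω ∈ Ω, the set Ω_ω of nearest neighbours of ω in Ω consists exactly of the two adjacent vertices ωe^{iπ/K} and ωe^{−iπ/K}, each at distance 2 sin(π/(2K)) from ω, and σ(ω) Σ_{ϖ∈Ω_ω} σ(ϖ)(ϖ−ω)/|ϖ−ω| = 2 sin(π/(2K)) ω. In particular the regular 2K-gon with alternating signs satisfies the symmetry hypothesis of the multi-soliton construction with γ = 2 sin(π/|Ω|). -/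

import Mathlib

open Complex
open scoped Classical

/-- The set of nearest neighbours of `ω` in a finite configuration `Ω ⊂ ℂ`:
the points of `Ω \ {ω}` minimizing the distance to `ω`. -/
noncomputable def nearestNeighbours (Ω : Finset ℂ) (ω : ℂ) : Finset ℂ :=
  Ω.filter (fun ϖ => ϖ ≠ ω ∧ ∀ ϖ' ∈ Ω, ϖ' ≠ ω → ‖ϖ - ω‖ ≤ ‖ϖ' - ω‖)

namespace PolygonAux

noncomputable def pf (K : ℕ) (n : ℤ) : ℂ :=
  Complex.exp (Real.pi * Complex.I * (n : ℂ) / (K : ℂ))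

lemma pf_nat (K : ℕ) (j : ℕ) :
    Complex.exp (Real.pi * Complex.I * (j : ℂ) / (K : ℂ)) = pf K (j : ℤ) := by
  unfold pf; norm_cast

lemma pf_add (K : ℕ) (m n : ℤ) : pf K (m + n) = pf K m * pf K n := by
  rw [pf, pf, pf, ← Complex.exp_add]
  congr 1
  push_cast
  ring

lemma pf_ne_zero (K : ℕ) (n : ℤ) : pf K n ≠ 0 := Complex.exp_ne_zero _

lemma pf_eq_one_iff (K : ℕ) (hK : 0 < K) (n : ℤ) : pf K n = 1 ↔ (2 * K : ℤ) ∣ n := by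
  have hπ : (Real.pi : ℂ) ≠ 0 := by exact_mod_cast Real.pi_ne_zero
  have hKc : (K : ℂ) ≠ 0 := by exact_mod_cast hK.ne'
  rw [pf, Complex.exp_eq_one_iff]
  constructor
  · rintro ⟨m, hm⟩
    refine ⟨m, ?_⟩
    have h2 : (Real.pi : ℂ) * Complex.I * (n : ℂ) =
        (Real.pi : ℂ) * Complex.I * (2 * (K : ℂ) * (m : ℂ)) := by
      field_simp at hm
      linear_combination ((Real.pi : ℂ) * Complex.I) * hm
    have h3 := mul_left_cancel₀ (mul_ne_zero hπ Complex.I_ne_zero) h2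
    exact_mod_cast h3
  · rintro ⟨m, rfl⟩
    refine ⟨m, ?_⟩
    push_cast
    field_simp

lemma pf_eq_iff (K : ℕ) (hK : 0 < K) (m n : ℤ) :
    pf K m = pf K n ↔ (2 * K : ℤ) ∣ (m - n) := by
  have h := pf_add K (m - n) n
  rw [show m - n + n = m from by ring] at h
  rw [← pf_eq_one_iff K hK]
  constructor
  · intro he
    have : pf K (m - n) * pf K n = 1 * pf K n := by rw [← h, he, one_mul]
    exact mul_right_cancel₀ (pf_ne_zero K n) this
  · intro he
    rw [h, he, one_mul]

lemma abs_pf (K : ℕ) (n : ℤ) : ‖pf K n‖ = 1 := by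
  have : pf K n = Complex.exp ((Real.pi * n / K : ℝ) * Complex.I) := by
    rw [pf]; congr 1; push_cast; ring
  rw [this, Complex.norm_exp_ofReal_mul_I]

lemma sin_sq_half (x : ℝ) : Real.sin (x / 2) ^ 2 = 1 / 2 - Real.cos x / 2 := by
  have h := Real.cos_sq (x / 2)
  rw [show 2 * (x / 2) = x from by ring] at h
  nlinarith [Real.sin_sq_add_cos_sq (x / 2)]

lemma abs_pf_sub_one (K : ℕ) (n : ℤ) :
    ‖pf K n - 1‖ = 2 * |Real.sin (Real.pi * (n : ℝ) / (2 * K))| := by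
  have hθ : pf K n = Complex.exp ((Real.pi * n / K : ℝ) * Complex.I) := by
    rw [pf]; congr 1; push_cast; ring
  set θ : ℝ := Real.pi * n / K with hθdef
  rw [hθ, Complex.exp_mul_I, ← Complex.ofReal_cos, ← Complex.ofReal_sin]
  have hrw : (Real.cos θ : ℂ) + (Real.sin θ : ℂ) * Complex.I - 1 =
      ((Real.cos θ - 1 : ℝ) : ℂ) + ((Real.sin θ : ℝ) : ℂ) * Complex.I := by
    push_cast; ring
  rw [hrw, Complex.norm_add_mul_I]
  have harg : Real.pi * (n : ℝ) / (2 * K) = θ / 2 := by rw [hθdef]; ring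
  rw [harg]
  rw [show (2 : ℝ) * |Real.sin (θ / 2)| = Real.sqrt ((2 * |Real.sin (θ / 2)|) ^ 2) from
    (Real.sqrt_sq (by positivity)).symm]
  congr 1
  have h1 := sin_sq_half θ
  have h2 := Real.sin_sq_add_cos_sq θ
  have h3 := _root_.sq_abs (Real.sin (θ / 2))
  nlinarith [h1, h2, h3]

lemma abs_pf_sub_pf (K : ℕ) (m n : ℤ) :
    ‖pf K m - pf K n‖ = 2 * |Real.sin (Real.pi * ((m - n : ℤ) : ℝ) / (2 * K))| := by
  have h : pf K m - pf K n = pf K n * (pf K (m - n) - 1) := by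
    rw [mul_sub, mul_one, ← pf_add, show n + (m - n) = m from by ring]
  rw [h, norm_mul, abs_pf, one_mul, abs_pf_sub_one]

lemma sin_min_pos (K : ℕ) (hK : 0 < K) : 0 < Real.sin (Real.pi / (2 * K)) := by
  apply Real.sin_pos_of_pos_of_lt_pi
  · positivity
  · have h1 : (1 : ℝ) < 2 * K := by
      have : (1 : ℝ) ≤ (K : ℝ) := by exact_mod_cast hK
      linarith
    exact div_lt_self Real.pi_pos h1

lemma sin_mono_le (K : ℕ) (hK : 0 < K) (r : ℤ) (h1 : 1 ≤ r) (h2 : r ≤ K) :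
    Real.sin (Real.pi / (2 * K)) ≤ Real.sin (Real.pi * (r : ℝ) / (2 * K)) := by
  have hKr : (1 : ℝ) ≤ (K : ℝ) := by exact_mod_cast hK
  have hr1 : (1 : ℝ) ≤ (r : ℝ) := by exact_mod_cast h1
  have hr2 : (r : ℝ) ≤ (K : ℝ) := by exact_mod_cast h2
  have hpi := Real.pi_pos
  apply Real.strictMonoOn_sin.monotoneOn
  · constructor
    · have : (0:ℝ) ≤ Real.pi / (2 * K) := by positivity
      linarith [Real.pi_pos]
    · rw [div_le_div_iff₀ (by positivity) (by norm_num)]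
      nlinarith
  · constructor
    · have : (0:ℝ) ≤ Real.pi * r / (2 * K) := by positivity
      linarith [Real.pi_pos]
    · rw [div_le_div_iff₀ (by positivity) (by norm_num)]
      nlinarith
  · rw [div_le_div_iff₀ (by positivity) (by positivity)]
    nlinarith [mul_nonneg (mul_nonneg hpi.le (by linarith : (0:ℝ) ≤ (r:ℝ) - 1))
      (by positivity : (0:ℝ) ≤ 2 * (K:ℝ))]

lemma sin_mono_lt (K : ℕ) (hK : 0 < K) (r : ℤ) (h1 : 2 ≤ r) (h2 : r ≤ K) :
    Real.sin (Real.pi / (2 * K)) < Real.sin (Real.pi * (r : ℝ) / (2 * K)) := by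
  have hKr : (1 : ℝ) ≤ (K : ℝ) := by exact_mod_cast hK
  have hr1 : (2 : ℝ) ≤ (r : ℝ) := by exact_mod_cast h1
  have hr2 : (r : ℝ) ≤ (K : ℝ) := by exact_mod_cast h2
  have hpi := Real.pi_pos
  apply Real.strictMonoOn_sin
  · constructor
    · have : (0:ℝ) ≤ Real.pi / (2 * K) := by positivity
      linarith [Real.pi_pos]
    · rw [div_le_div_iff₀ (by positivity) (by norm_num)]
      nlinarith
  · constructor
    · have : (0:ℝ) ≤ Real.pi * r / (2 * K) := by positivity
      linarith [Real.pi_pos]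
    · rw [div_le_div_iff₀ (by positivity) (by norm_num)]
      nlinarith
  · rw [div_lt_div_iff₀ (by positivity) (by positivity)]
    nlinarith [mul_pos (mul_pos hpi (by linarith : (0:ℝ) < (r:ℝ) - 1))
      (by positivity : (0:ℝ) < 2 * (K:ℝ))]

lemma sin_lb (K : ℕ) (hK : 0 < K) (r : ℤ) (h1 : 1 ≤ r) (h2 : r ≤ 2 * K - 1) :
    Real.sin (Real.pi / (2 * K)) ≤ Real.sin (Real.pi * (r : ℝ) / (2 * K)) := by
  rcases le_or_gt r K with h | h
  · exact sin_mono_le K hK r h1 h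
  · have hKne : (K : ℝ) ≠ 0 := by exact_mod_cast hK.ne'
    have hrw : Real.pi * (r : ℝ) / (2 * K) =
        Real.pi - Real.pi * ((2 * K - r : ℤ) : ℝ) / (2 * K) := by
      push_cast
      field_simp
      ring
    rw [hrw, Real.sin_pi_sub]
    exact sin_mono_le K hK (2 * K - r) (by omega) (by omega)

lemma sin_lb_strict (K : ℕ) (hK : 0 < K) (r : ℤ) (h1 : 2 ≤ r) (h2 : r ≤ 2 * K - 2) :
    Real.sin (Real.pi / (2 * K)) < Real.sin (Real.pi * (r : ℝ) / (2 * K)) := by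
  rcases le_or_gt r K with h | h
  · exact sin_mono_lt K hK r h1 h
  · have hKne : (K : ℝ) ≠ 0 := by exact_mod_cast hK.ne'
    have hrw : Real.pi * (r : ℝ) / (2 * K) =
        Real.pi - Real.pi * ((2 * K - r : ℤ) : ℝ) / (2 * K) := by
      push_cast
      field_simp
      ring
    rw [hrw, Real.sin_pi_sub]
    exact sin_mono_lt K hK (2 * K - r) (by omega) (by omega)

lemma abs_sin_emod (K : ℕ) (hK : 0 < K) (d : ℤ) :
    |Real.sin (Real.pi * (d : ℝ) / (2 * K))| =
      |Real.sin (Real.pi * ((d % (2 * K) : ℤ) : ℝ) / (2 * K))| := by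
  have hne : (2 * (K : ℤ)) ≠ 0 := by positivity
  have hKne : (K : ℝ) ≠ 0 := by exact_mod_cast hK.ne'
  have hdm := Int.mul_ediv_add_emod d (2 * K)
  set q : ℤ := d / (2 * K) with hq
  set r : ℤ := d % (2 * K) with hr
  have hrw : Real.pi * (d : ℝ) / (2 * K) =
      Real.pi * (r : ℝ) / (2 * K) + (q : ℤ) * Real.pi := by
    have : (d : ℝ) = 2 * K * q + r := by exact_mod_cast hdm.symm
    rw [this]
    field_simp
    ring
  rw [hrw, Real.sin_add_int_mul_pi, abs_mul]
  rcases Int.even_or_odd q with hq2 | hq2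
  · rw [hq2.neg_one_zpow, abs_one, one_mul]
  · rw [hq2.neg_one_zpow, abs_neg, abs_one, one_mul]

lemma dist_ge (K : ℕ) (hK : 0 < K) (m n : ℤ) (h : ¬ (2 * K : ℤ) ∣ (m - n)) :
    2 * Real.sin (Real.pi / (2 * K)) ≤ ‖pf K m - pf K n‖ := by
  rw [abs_pf_sub_pf]
  set d : ℤ := m - n with hd
  have hne : (2 * (K : ℤ)) ≠ 0 := by positivity
  have hr0 : 0 ≤ d % (2 * K) := Int.emod_nonneg d hne
  have hrlt : d % (2 * K) < 2 * K := Int.emod_lt_of_pos d (by positivity)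
  have hrne : d % (2 * K) ≠ 0 := fun h0 => h (Int.dvd_of_emod_eq_zero h0)
  rw [abs_sin_emod K hK d]
  have hlb := sin_lb K hK (d % (2 * K)) (by omega) (by omega)
  have habs : Real.sin (Real.pi * ((d % (2 * K) : ℤ) : ℝ) / (2 * K)) ≤
      |Real.sin (Real.pi * ((d % (2 * K) : ℤ) : ℝ) / (2 * K))| := le_abs_self _
  linarith

lemma near_of_dist_le (K : ℕ) (hK : 0 < K) (m n : ℤ) (h : ¬ (2 * K : ℤ) ∣ (m - n))
    (hle : ‖pf K m - pf K n‖ ≤ 2 * Real.sin (Real.pi / (2 * K))) :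
    (2 * K : ℤ) ∣ (m - n - 1) ∨ (2 * K : ℤ) ∣ (m - n + 1) := by
  set d : ℤ := m - n with hd
  have hne : (2 * (K : ℤ)) ≠ 0 := by positivity
  have hr0 : 0 ≤ d % (2 * K) := Int.emod_nonneg d hne
  have hrlt : d % (2 * K) < 2 * K := Int.emod_lt_of_pos d (by positivity)
  have hrne : d % (2 * K) ≠ 0 := fun h0 => h (Int.dvd_of_emod_eq_zero h0)
  have hdm := Int.mul_ediv_add_emod d (2 * K)
  by_contra hcon
  push_neg at hcon
  obtain ⟨hc1, hc2⟩ := hcon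
  have hr1 : d % (2 * K) ≠ 1 := by
    intro h1
    exact hc1 ⟨d / (2 * K), by omega⟩
  have hr2 : d % (2 * K) ≠ 2 * K - 1 := by
    intro h1
    exact hc2 ⟨d / (2 * K) + 1, by linarith [hdm]⟩
  have hstrict := sin_lb_strict K hK (d % (2 * K)) (by omega) (by omega)
  rw [abs_pf_sub_pf, abs_sin_emod K hK] at hle
  have habs : Real.sin (Real.pi * ((d % (2 * K) : ℤ) : ℝ) / (2 * K)) ≤
      |Real.sin (Real.pi * ((d % (2 * K) : ℤ) : ℝ) / (2 * K))| := le_abs_self _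
  linarith

end PolygonAux

open PolygonAux

theorem polygon_alternating_symmetry (K : ℕ) (hK : 2 ≤ K)
    (Ω : Finset ℂ)
    (hΩ : Ω = (Finset.range (2 * K)).image
        (fun k : ℕ => Complex.exp (Real.pi * Complex.I * (k : ℂ) / (K : ℂ))))
    (σ : ℂ → ℝ)
    (hσ : ∀ k : ℕ, σ (Complex.exp (Real.pi * Complex.I * (k : ℂ) / (K : ℂ))) = (-1 : ℝ) ^ k) :
    ∀ k : ℕ, k < 2 * K →
      nearestNeighbours Ω (Complex.exp (Real.pi * Complex.I * (k : ℂ) / (K : ℂ))) =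
        ({Complex.exp (Real.pi * Complex.I * (k : ℂ) / (K : ℂ)) *
            Complex.exp (Real.pi * Complex.I / (K : ℂ)),
          Complex.exp (Real.pi * Complex.I * (k : ℂ) / (K : ℂ)) *
            Complex.exp (-(Real.pi * Complex.I) / (K : ℂ))} : Finset ℂ) ∧
      (∀ ϖ ∈ nearestNeighbours Ω (Complex.exp (Real.pi * Complex.I * (k : ℂ) / (K : ℂ))),
        ‖ϖ - Complex.exp (Real.pi * Complex.I * (k : ℂ) / (K : ℂ))‖ =
          2 * Real.sin (Real.pi / (2 * K))) ∧
      (σ (Complex.exp (Real.pi * Complex.I * (k : ℂ) / (K : ℂ))) : ℂ) *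
          (∑ ϖ ∈ nearestNeighbours Ω (Complex.exp (Real.pi * Complex.I * (k : ℂ) / (K : ℂ))),
            (σ ϖ : ℂ) *
              ((ϖ - Complex.exp (Real.pi * Complex.I * (k : ℂ) / (K : ℂ))) /
                ((‖ϖ - Complex.exp (Real.pi * Complex.I * (k : ℂ) / (K : ℂ))‖ : ℝ) : ℂ))) =
        ((2 * Real.sin (Real.pi / (2 * K)) : ℝ) : ℂ) *
          Complex.exp (Real.pi * Complex.I * (k : ℂ) / (K : ℂ)) := by
  have hK0 : 0 < K := by omega
  intro k hk
  -- identify the exponentials with `pf`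
  have hone : Complex.exp (Real.pi * Complex.I / (K : ℂ)) = pf K 1 := by
    unfold pf; norm_num
  have hmone : Complex.exp (-(Real.pi * Complex.I) / (K : ℂ)) = pf K (-1) := by
    unfold pf; push_cast; ring_nf
  have ha : Complex.exp (Real.pi * Complex.I * (k : ℂ) / (K : ℂ)) *
      Complex.exp (Real.pi * Complex.I / (K : ℂ)) = pf K ((k : ℤ) + 1) := by
    rw [pf_nat, hone, pf_add]
  have hb : Complex.exp (Real.pi * Complex.I * (k : ℂ) / (K : ℂ)) *
      Complex.exp (-(Real.pi * Complex.I) / (K : ℂ)) = pf K ((k : ℤ) - 1) := by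
    rw [pf_nat, hmone, ← pf_add, show (k : ℤ) + (-1) = (k : ℤ) - 1 from by ring]
  rw [ha, hb, pf_nat]
  -- membership in Ω
  have hmem : ∀ n : ℤ, pf K n ∈ Ω := by
    intro n
    rw [hΩ, Finset.mem_image]
    have hne : (2 * (K : ℤ)) ≠ 0 := by positivity
    have hr0 : 0 ≤ n % (2 * K) := Int.emod_nonneg n hne
    have hrlt : n % (2 * K) < 2 * K := Int.emod_lt_of_pos n (by positivity)
    have hdm := Int.mul_ediv_add_emod n (2 * K)
    refine ⟨(n % (2 * K)).toNat, ?_, ?_⟩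
    · rw [Finset.mem_range]; omega
    · rw [pf_nat, pf_eq_iff K hK0]
      refine ⟨-(n / (2 * K)), ?_⟩
      have ht : (((n % (2 * K)).toNat : ℕ) : ℤ) = n % (2 * K) := Int.toNat_of_nonneg hr0
      rw [ht]
      linarith
  -- every element of Ω is a pf
  have hΩpf : ∀ ϖ ∈ Ω, ∃ j : ℕ, ϖ = pf K (j : ℤ) := by
    intro ϖ hϖ
    rw [hΩ, Finset.mem_image] at hϖ
    obtain ⟨j, _, hj⟩ := hϖ
    exact ⟨j, by rw [← hj, pf_nat]⟩
  -- σ on pf of naturals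
  have hσ' : ∀ n : ℕ, σ (pf K (n : ℤ)) = (-1 : ℝ) ^ n := fun n => by
    rw [← pf_nat]; exact hσ n
  have hs := sin_min_pos K hK0
  -- distances to the two neighbours
  have hd1 : ‖pf K ((k : ℤ) + 1) - pf K (k : ℤ)‖ =
      2 * Real.sin (Real.pi / (2 * K)) := by
    rw [abs_pf_sub_pf, show (k : ℤ) + 1 - (k : ℤ) = 1 from by ring]
    rw [show Real.pi * ((1 : ℤ) : ℝ) / (2 * K) = Real.pi / (2 * K) from by push_cast; ring]
    rw [abs_of_pos hs]
  have hd2 : ‖pf K ((k : ℤ) - 1) - pf K (k : ℤ)‖ =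
      2 * Real.sin (Real.pi / (2 * K)) := by
    rw [abs_pf_sub_pf, show (k : ℤ) - 1 - (k : ℤ) = -1 from by ring]
    rw [show Real.pi * ((-1 : ℤ) : ℝ) / (2 * K) = -(Real.pi / (2 * K)) from by push_cast; ring]
    rw [Real.sin_neg, abs_neg, abs_of_pos hs]
  -- non-equalities
  have hne1 : pf K ((k : ℤ) + 1) ≠ pf K (k : ℤ) := by
    rw [Ne, pf_eq_iff K hK0]
    intro hdvd
    rw [show (k : ℤ) + 1 - (k : ℤ) = 1 from by ring] at hdvd
    have := Int.le_of_dvd one_pos hdvd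
    omega
  have hne2 : pf K ((k : ℤ) - 1) ≠ pf K (k : ℤ) := by
    rw [Ne, pf_eq_iff K hK0]
    intro hdvd
    rw [show (k : ℤ) - 1 - (k : ℤ) = -1 from by ring] at hdvd
    have := Int.le_of_dvd one_pos ((Int.dvd_neg).mp hdvd)
    omega
  have hab : pf K ((k : ℤ) + 1) ≠ pf K ((k : ℤ) - 1) := by
    rw [Ne, pf_eq_iff K hK0]
    intro hdvd
    rw [show (k : ℤ) + 1 - ((k : ℤ) - 1) = 2 from by ring] at hdvd
    have := Int.le_of_dvd (by norm_num) hdvd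
    omega
  -- the set of nearest neighbours
  have hset : nearestNeighbours Ω (pf K (k : ℤ)) =
      ({pf K ((k : ℤ) + 1), pf K ((k : ℤ) - 1)} : Finset ℂ) := by
    ext ϖ
    simp only [nearestNeighbours, Finset.mem_filter, Finset.mem_insert, Finset.mem_singleton]
    constructor
    · rintro ⟨hϖΩ, hneq, hmin⟩
      obtain ⟨j, rfl⟩ := hΩpf ϖ hϖΩ
      have hnd : ¬ (2 * K : ℤ) ∣ ((j : ℤ) - (k : ℤ)) := by
        intro hdvd
        exact hneq ((pf_eq_iff K hK0 _ _).mpr hdvd)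
      have hle : ‖pf K (j : ℤ) - pf K (k : ℤ)‖ ≤
          2 * Real.sin (Real.pi / (2 * K)) := by
        rw [← hd1]
        exact hmin _ (hmem _) hne1
      rcases near_of_dist_le K hK0 _ _ hnd hle with h | h
      · left
        exact (pf_eq_iff K hK0 _ _).mpr (by
          have : (j : ℤ) - ((k : ℤ) + 1) = (j : ℤ) - (k : ℤ) - 1 := by ring
          rw [this]; exact h)
      · right
        exact (pf_eq_iff K hK0 _ _).mpr (by
          have : (j : ℤ) - ((k : ℤ) - 1) = (j : ℤ) - (k : ℤ) + 1 := by ring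
          rw [this]; exact h)
    · intro hcase
      have hmin : ∀ ϖ' ∈ Ω, ϖ' ≠ pf K (k : ℤ) →
          2 * Real.sin (Real.pi / (2 * K)) ≤ ‖ϖ' - pf K (k : ℤ)‖ := by
        intro ϖ' hϖ' hne'
        obtain ⟨j', rfl⟩ := hΩpf ϖ' hϖ'
        apply dist_ge K hK0
        intro hdvd
        exact hne' ((pf_eq_iff K hK0 _ _).mpr hdvd)
      rcases hcase with rfl | rfl
      · exact ⟨hmem _, hne1, fun ϖ' h1 h2 => hd1 ▸ hmin ϖ' h1 h2⟩
      · exact ⟨hmem _, hne2, fun ϖ' h1 h2 => hd2 ▸ hmin ϖ' h1 h2⟩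
  refine ⟨hset, ?_, ?_⟩
  · intro ϖ hϖ
    rw [hset] at hϖ
    simp only [Finset.mem_insert, Finset.mem_singleton] at hϖ
    rcases hϖ with rfl | rfl
    · exact hd1
    · exact hd2
  · -- the sum
    rw [hset, Finset.sum_pair hab, hd1, hd2]
    -- σ values
    have hσk : σ (pf K (k : ℤ)) = (-1 : ℝ) ^ k := hσ' k
    have hσa : σ (pf K ((k : ℤ) + 1)) = -(-1 : ℝ) ^ k := by
      have : ((k : ℤ) + 1) = ((k + 1 : ℕ) : ℤ) := by push_cast; ring
      rw [this, hσ' (k + 1), pow_succ]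
      ring
    have hσb : σ (pf K ((k : ℤ) - 1)) = -(-1 : ℝ) ^ k := by
      have heq : pf K ((k : ℤ) - 1) = pf K ((k + 2 * K - 1 : ℕ) : ℤ) := by
        rw [pf_eq_iff K hK0]
        refine ⟨-1, ?_⟩
        push_cast [Nat.cast_sub (by omega : 1 ≤ k + 2 * K)]
        ring
      rw [heq, hσ' (k + 2 * K - 1)]
      have hodd : k + 2 * K - 1 = k + 1 + 2 * (K - 1) := by omega
      rw [hodd, pow_add, pow_mul, pow_succ]
      norm_num
    rw [hσk, hσa, hσb]
    -- cosine identity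
    have hcos : pf K 1 + pf K (-1) = ((2 * Real.cos (Real.pi / K) : ℝ) : ℂ) := by
      have h1 : pf K 1 = Complex.exp (((Real.pi / K : ℝ) : ℂ) * Complex.I) := by
        rw [pf]; congr 1; push_cast; ring
      have h2 : pf K (-1) = Complex.exp (((-(Real.pi / K) : ℝ) : ℂ) * Complex.I) := by
        rw [pf]; congr 1; push_cast; ring
      rw [h1, h2, Complex.exp_mul_I, Complex.exp_mul_I, Complex.ofReal_neg,
        Complex.cos_neg, Complex.sin_neg]
      push_cast
      ring
    have hc1 : pf K ((k : ℤ) + 1) = pf K (k : ℤ) * pf K 1 := pf_add K (k : ℤ) 1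
    have hc2 : pf K ((k : ℤ) - 1) = pf K (k : ℤ) * pf K (-1) := by
      rw [show (k : ℤ) - 1 = (k : ℤ) + (-1) from by ring]; exact pf_add K _ _
    rw [hc1, hc2]
    have hident : (2 * Real.sin (Real.pi / (2 * K))) ^ 2 = 2 - 2 * Real.cos (Real.pi / K) := by
      have h := sin_sq_half (Real.pi / K)
      have harg : Real.pi / K / 2 = Real.pi / (2 * K) := by ring
      rw [harg] at h
      nlinarith
    have hidentC : (((2 * Real.sin (Real.pi / (2 * K))) ^ 2 : ℝ) : ℂ) =
        2 - 2 * ((Real.cos (Real.pi / K) : ℝ) : ℂ) := by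
      push_cast [hident]
      ring
    have hs0 : ((2 * Real.sin (Real.pi / (2 * K)) : ℝ) : ℂ) ≠ 0 := by
      exact_mod_cast (by positivity : (2 * Real.sin (Real.pi / (2 * K)) : ℝ) ≠ 0)
    have hsq : (((-1 : ℝ) ^ k : ℝ) : ℂ) * (((-1 : ℝ) ^ k : ℝ) : ℂ) = 1 := by
      push_cast
      rw [← pow_add, ← two_mul, pow_mul]
      norm_num
    have hsgn : ((-(-1 : ℝ) ^ k : ℝ) : ℂ) = -(((-1 : ℝ) ^ k : ℝ) : ℂ) := by
      push_cast; ring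
    have hcosC : pf K 1 + pf K (-1) = 2 * ((Real.cos (Real.pi / K) : ℝ) : ℂ) := by
      rw [hcos]; push_cast; ring
    have hS2 : (((2 * Real.sin (Real.pi / (2 * K)) : ℝ) : ℂ)) ^ 2 =
        2 - 2 * ((Real.cos (Real.pi / K) : ℝ) : ℂ) := by
      rw [← hidentC]; push_cast; ring
    set S : ℂ := ((2 * Real.sin (Real.pi / (2 * K)) : ℝ) : ℂ) with hSdef
    set C : ℂ := ((Real.cos (Real.pi / K) : ℝ) : ℂ) with hCdef
    set E : ℂ := (((-1 : ℝ) ^ k : ℝ) : ℂ) with hEdef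
    set ω : ℂ := pf K (k : ℤ) with hωdef
    set c1 : ℂ := pf K 1 with hc1def
    set c2 : ℂ := pf K (-1) with hc2def
    rw [hsgn]
    field_simp
    linear_combination (ω * (2 - c1 - c2)) * hsq + (-ω) * hcosC +
      (-ω) * hS2
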